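/- There is an absolute constant c > 0 such that in the herald-protocol round model, for every vertex x with Γ(x) > 0 and every channel i ∈ {1,…,n_A}, the probability that x receives a message on channel i is at most c · π_ℓ · γ(x) / Γ(x). -/

import Mathlib

open Finset

/-- The action a vertex takes in one round: `none` is idle, `some (i, false)` is listening on
channel `i+1`, and `some (i, true)` is broadcasting on channel `i+1` (channels are numbered
`1, …, nA`). -/
abbrev Act (nA : ℕ) := Option (Fin nA × Bool)

/-- The probability of each action in the herald-protocol round model, for a vertex with
activity `g` and listening probability `p`: on channel `i+1` the vertex listens with
probability `p·g·2^{-(i+1)}` and broadcasts with probability `(1−p)·g·2^{-(i+1)}`; with the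
remaining probability it is idle. -/
noncomputable def actProb (nA : ℕ) (p g : ℝ) : Act nA → ℝ
  | some (i, false) => p * g * (2 : ℝ) ^ (-((i.1 : ℤ) + 1))
  | some (i, true) => (1 - p) * g * (2 : ℝ) ^ (-((i.1 : ℤ) + 1))
  | none => 1 - ∑ i : Fin nA, g * (2 : ℝ) ^ (-((i.1 : ℤ) + 1))

open Classical in
/-- The probability of an event `E` in one round of the herald-protocol round model, where all
vertices choose their actions independently. -/
noncomputable def roundPr {V : Type*} [Fintype V] [DecidableEq V] (nA : ℕ) (p : ℝ)
    (γ : V → ℝ) (E : (V → Act nA) → Prop) : ℝ :=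
  ∑ f : V → Act nA, if E f then ∏ v, actProb nA p (γ v) (f v) else 0

/-- `v` listens on channel `i` (i.e. channel number `i+1`). -/
def listens {V : Type*} {nA : ℕ} (f : V → Act nA) (v : V) (i : Fin nA) : Prop :=
  f v = some (i, false)

/-- `v` broadcasts on channel `i` (i.e. channel number `i+1`). -/
def broadcasts {V : Type*} {nA : ℕ} (f : V → Act nA) (v : V) (i : Fin nA) : Prop :=
  f v = some (i, true)

/-- `v` operates (listens or broadcasts) on channel `i`. -/
def operates {V : Type*} {nA : ℕ} (f : V → Act nA) (v : V) (i : Fin nA) : Prop :=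
  listens f v i ∨ broadcasts f v i

open Classical in
/-- `v` receives a message on channel `i`: it listens on channel `i` and exactly one of its
neighbors broadcasts on channel `i`. -/
def receivesOn {V : Type*} [Fintype V] [DecidableEq V] (G : SimpleGraph V)
    [DecidableRel G.Adj] {nA : ℕ} (f : V → Act nA) (v : V) (i : Fin nA) : Prop :=
  listens f v i ∧ ((G.neighborFinset v).filter fun w => broadcasts f w i).card = 1

/-- `v` receives a message (on some channel). -/
def receives {V : Type*} [Fintype V] [DecidableEq V] (G : SimpleGraph V)
    [DecidableRel G.Adj] {nA : ℕ} (f : V → Act nA) (v : V) : Prop :=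
  ∃ i : Fin nA, receivesOn G f v i

/-- `ball G u k` is the set `N^k(u)` of vertices at distance at most `k` from `u` in `G`
(including `u` itself). -/
def ball {V : Type*} (G : SimpleGraph V) (u : V) (k : ℕ) : Set V :=
  {v | ∃ p : G.Walk u v, p.length ≤ k}

/-- The independence number of the subgraph of `G` induced by a vertex set `S`. -/
noncomputable def indepNumOn {V : Type*} [Fintype V] (G : SimpleGraph V) (S : Set V) : ℕ :=
  sSup {n | ∃ s : Finset V, ↑s ⊆ S ∧ (∀ a ∈ s, ∀ b ∈ s, a ≠ b → ¬ G.Adj a b) ∧ s.card = n}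

/-- `Γ(x) = ∑_{y ∈ N(x) ∪ {x}} γ(y)`. -/
noncomputable def Gam {V : Type*} [Fintype V] [DecidableEq V] (G : SimpleGraph V)
    [DecidableRel G.Adj] (γ : V → ℝ) (x : V) : ℝ :=
  ∑ y ∈ insert x (G.neighborFinset x), γ y

/-- `Γ°(x) = ∑_{y ∈ N(x)} γ(y)`. -/
noncomputable def GamO {V : Type*} [Fintype V] [DecidableEq V] (G : SimpleGraph V)
    [DecidableRel G.Adj] (γ : V → ℝ) (x : V) : ℝ :=
  ∑ y ∈ G.neighborFinset x, γ y

lemma sum_actProb (nA : ℕ) (p g : ℝ) : ∑ a : Act nA, actProb nA p g a = 1 := by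
  rw [Fintype.sum_option]
  have : ∑ a : Fin nA × Bool, actProb nA p g (some a)
      = ∑ i : Fin nA, g * (2:ℝ) ^ (-((i:ℤ)+1)) := by
    rw [Fintype.sum_prod_type]
    refine Finset.sum_congr rfl fun i _ => ?_
    rw [Fintype.sum_bool]
    simp only [actProb]
    ring
  rw [this]
  simp only [actProb]
  ring

section Aux
variable {V : Type*} [Fintype V] [DecidableEq V]

open Classical in
lemma roundPr_congr (nA : ℕ) (p : ℝ) (γ : V → ℝ) {E E' : (V → Act nA) → Prop}
    (h : ∀ f, E f ↔ E' f) : roundPr nA p γ E = roundPr nA p γ E' := by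
  unfold roundPr
  exact Finset.sum_congr rfl fun f _ => by rw [if_congr (h f) rfl rfl]

open Classical in
lemma roundPr_cyl (nA : ℕ) (p : ℝ) (γ : V → ℝ) (A : V → Finset (Act nA)) :
    roundPr nA p γ (fun f => ∀ v, f v ∈ A v) = ∏ v, ∑ a ∈ A v, actProb nA p (γ v) a := by
  rw [roundPr, Finset.prod_univ_sum]
  have h2 : (∑ f ∈ Finset.univ, if f ∈ Fintype.piFinset A then ∏ v, actProb nA p (γ v) (f v) else 0)
      = ∑ f ∈ Fintype.piFinset A, ∏ v, actProb nA p (γ v) (f v) := by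
    rw [Finset.sum_ite_mem, Finset.univ_inter]
  rw [← h2]
  refine Finset.sum_congr rfl fun f _ => ?_
  by_cases hf : f ∈ Fintype.piFinset A
  · rw [if_pos ((Fintype.mem_piFinset).mp hf), if_pos hf]
  · rw [if_neg (fun h => hf ((Fintype.mem_piFinset).mpr h)), if_neg hf]

open Classical in
lemma roundPr_exists (nA : ℕ) (p : ℝ) (γ : V → ℝ) {W : Type*} (N : Finset W)
    (Q : W → (V → Act nA) → Prop)
    (hdisj : ∀ f w w', w ∈ N → w' ∈ N → Q w f → Q w' f → w = w') :
    roundPr nA p γ (fun f => ∃ w ∈ N, Q w f) = ∑ w ∈ N, roundPr nA p γ (fun f => Q w f) := by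
  unfold roundPr
  rw [Finset.sum_comm]
  refine Finset.sum_congr rfl fun f _ => ?_
  by_cases h : ∃ w ∈ N, Q w f
  · obtain ⟨w0, hw0, hQ⟩ := h
    rw [if_pos ⟨w0, hw0, hQ⟩, Finset.sum_eq_single_of_mem w0 hw0]
    · rw [if_pos hQ]
    · intro w hw hne
      rw [if_neg fun hQw => hne (hdisj f w w0 hw hw0 hQw hQ)]
  · rw [if_neg h]
    exact (Finset.sum_eq_zero fun w hw => if_neg fun hQw => h ⟨w, hw, hQw⟩).symm

end Aux

lemma S_exp_le_one {S : ℝ} (hS : 0 ≤ S) : S * Real.exp (-S) ≤ 1 := by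
  have h := Real.add_one_le_exp S
  have he : (0:ℝ) < Real.exp (-S) := Real.exp_pos _
  have : S * Real.exp (-S) ≤ Real.exp S * Real.exp (-S) :=
    mul_le_mul_of_nonneg_right (by linarith) he.le
  rwa [← Real.exp_add, add_neg_cancel, Real.exp_zero] at this

lemma Ssq_exp_le_four {S : ℝ} (hS : 0 ≤ S) : S ^ 2 * Real.exp (-S) ≤ 4 := by
  have h := Real.add_one_le_exp (S / 2)
  have hsq : (1 + S / 2) ^ 2 ≤ Real.exp (S / 2) ^ 2 := by
    have h0 : (0:ℝ) ≤ 1 + S / 2 := by linarith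
    exact pow_le_pow_left₀ h0 (by linarith) 2
  have hexp : Real.exp (S / 2) ^ 2 = Real.exp S := by
    rw [← Real.exp_nat_mul]; norm_num; ring_nf
  have hkey : S ^ 2 ≤ 4 * Real.exp S := by nlinarith
  have he : (0:ℝ) < Real.exp (-S) := Real.exp_pos _
  have := mul_le_mul_of_nonneg_right hkey he.le
  calc S ^ 2 * Real.exp (-S) ≤ 4 * Real.exp S * Real.exp (-S) := this
    _ = 4 := by rw [mul_assoc, ← Real.exp_add, add_neg_cancel, Real.exp_zero, mul_one]

lemma exp_quarter_le : Real.exp (1/4 : ℝ) ≤ 4/3 := by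
  have h := Real.add_one_le_exp (-(1/4) : ℝ)
  have h2 : (3/4 : ℝ) ≤ Real.exp (-(1/4)) := by linarith
  have h3 : Real.exp ((1/4 : ℝ)) = (Real.exp (-(1/4)))⁻¹ := by
    rw [← Real.exp_neg]; norm_num
  rw [h3]
  rw [show (4/3 : ℝ) = (3/4 : ℝ)⁻¹ by norm_num]
  exact inv_anti₀ (by norm_num) h2

lemma B_le {V : Type*} [DecidableEq V] (N : Finset V) (q : V → ℝ)
    (h0 : ∀ v ∈ N, 0 ≤ q v) (h1 : ∀ v ∈ N, q v ≤ 1/4) :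
    ∑ w ∈ N, q w * ∏ v ∈ N.erase w, (1 - q v)
      ≤ (4/3) * (∑ v ∈ N, q v) * Real.exp (-∑ v ∈ N, q v) := by
  set S := ∑ v ∈ N, q v with hS
  have hterm : ∀ w ∈ N, q w * ∏ v ∈ N.erase w, (1 - q v)
      ≤ q w * ((4/3) * Real.exp (-S)) := by
    intro w hw
    refine mul_le_mul_of_nonneg_left ?_ (h0 w hw)
    have hprod : ∏ v ∈ N.erase w, (1 - q v) ≤ ∏ v ∈ N.erase w, Real.exp (-q v) := by
      refine Finset.prod_le_prod (fun v hv => ?_) (fun v hv => ?_)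
      · have := h1 v (Finset.mem_of_mem_erase hv); linarith
      · have := Real.add_one_le_exp (-q v); linarith
    have hsum : ∑ v ∈ N.erase w, q v = S - q w := Finset.sum_erase_eq_sub hw
    have hexp : ∏ v ∈ N.erase w, Real.exp (-q v) = Real.exp (-(S - q w)) := by
      rw [← Real.exp_sum, Finset.sum_neg_distrib, hsum]
    have h4 : Real.exp (-(S - q w)) = Real.exp (q w) * Real.exp (-S) := by
      rw [← Real.exp_add]; ring_nf
    have h5 : Real.exp (q w) ≤ 4/3 := by
      calc Real.exp (q w) ≤ Real.exp (1/4) :=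
        Real.exp_le_exp.mpr (h1 w hw)
        _ ≤ 4/3 := exp_quarter_le
    calc ∏ v ∈ N.erase w, (1 - q v) ≤ Real.exp (-(S - q w)) := by rw [← hexp] at *; linarith [hprod, hexp]
      _ = Real.exp (q w) * Real.exp (-S) := h4
      _ ≤ (4/3) * Real.exp (-S) := mul_le_mul_of_nonneg_right h5 (Real.exp_pos _).le
  calc ∑ w ∈ N, q w * ∏ v ∈ N.erase w, (1 - q v)
      ≤ ∑ w ∈ N, q w * ((4/3) * Real.exp (-S)) := Finset.sum_le_sum hterm
    _ = (4/3) * S * Real.exp (-S) := by rw [← Finset.sum_mul]; ring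

lemma final_ineq (pl g0 t S E Γ Γo : ℝ) (hpl0 : 0 < pl) (hpl : pl ≤ 1/2)
    (hg0 : 0 ≤ g0) (hg2 : g0 ≤ 1/2) (ht0 : 0 < t) (ht12 : t ≤ 1/2)
    (hS0 : 0 ≤ S) (hE0 : 0 ≤ E) (hSE1 : S * E ≤ 1) (hS2E : S ^ 2 * E ≤ 4)
    (hΓpos : 0 < Γ) (hΓ : Γ = g0 + Γo) (hΓo0 : 0 ≤ Γo)
    (hSeq : S = (1 - pl) * Γo * t) :
    (pl * g0 * t) * ((4/3) * S * E) ≤ 100 * pl * g0 / Γ := by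
  have hplg0 : 0 ≤ pl * g0 := mul_nonneg hpl0.le hg0
  rw [le_div_iff₀ hΓpos]
  rcases le_or_gt Γ 2 with hle | hgt
  · have hu0 : 0 ≤ S * E := mul_nonneg hS0 hE0
    have htu : t * (S * E) ≤ 1/2 := by nlinarith
    have heq : pl * g0 * t * (4/3 * S * E) = 4/3 * (pl * g0) * (t * (S * E)) := by ring
    have h5 : 4/3 * (pl * g0) * (t * (S * E)) ≤ 4/3 * (pl * g0) * (1/2) :=
      mul_le_mul_of_nonneg_left htu (by positivity)
    have h6 : pl * g0 * t * (4/3 * S * E) ≤ 2/3 * (pl * g0) := by rw [heq]; linarith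
    have h7 : pl * g0 * t * (4/3 * S * E) * Γ ≤ 2/3 * (pl * g0) * Γ :=
      mul_le_mul_of_nonneg_right h6 hΓpos.le
    have h8 : 2/3 * (pl * g0) * Γ ≤ 2/3 * (pl * g0) * 2 :=
      mul_le_mul_of_nonneg_left hle (by positivity)
    nlinarith
  · have hΓolb : (3/4) * Γ ≤ Γo := by linarith
    have hSt : (3/8) * (Γ * t) ≤ S := by
      have h1 : (3/4) * Γ * t ≤ Γo * t := mul_le_mul_of_nonneg_right hΓolb ht0.le
      have h2 : (1/2) * (Γo * t) ≤ (1 - pl) * (Γo * t) :=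
        mul_le_mul_of_nonneg_right (by linarith) (mul_nonneg hΓo0 ht0.le)
      nlinarith
    have hΓt : Γ * t ≤ (8/3) * S := by linarith
    have hkey : (Γ * t) * (S * E) ≤ (8/3) * S * (S * E) :=
      mul_le_mul_of_nonneg_right hΓt (mul_nonneg hS0 hE0)
    have hkey2 : (8/3) * S * (S * E) ≤ 32/3 := by nlinarith
    have heq : pl * g0 * t * (4/3 * S * E) * Γ
        = 4/3 * (pl * g0) * ((Γ * t) * (S * E)) := by ring
    rw [heq]
    have h5 : 4/3 * (pl * g0) * ((Γ * t) * (S * E)) ≤ 4/3 * (pl * g0) * (32/3) :=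
      mul_le_mul_of_nonneg_left (by linarith) (by positivity)
    nlinarith

/-- There is an absolute constant `c > 0` such that in the herald-protocol round model, for
every vertex `x` with `Γ(x) > 0` and every channel `i`, the probability that `x` receives a
message on channel `i` is at most `c · π_ℓ · γ(x) / Γ(x)`. -/
theorem stmt_11 : ∃ c : ℝ, 0 < c ∧
    ∀ (V : Type) [Fintype V] [DecidableEq V] (G : SimpleGraph V) [DecidableRel G.Adj]
      (nA : ℕ), 1 ≤ nA →
      ∀ pl : ℝ, 0 < pl → pl ≤ 1 / 2 →
      ∀ γ : V → ℝ, (∀ y, 0 ≤ γ y ∧ γ y ≤ 1 / 2) →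
      ∀ x : V, 0 < Gam G γ x →
      ∀ i : Fin nA,
      roundPr nA pl γ (fun f => receivesOn G f x i) ≤ c * pl * γ x / Gam G γ x := by
  classical
  refine ⟨100, by norm_num, ?_⟩
  intro V _ _ G _ nA hnA pl hpl0 hpl γ hγ x hΓpos i
  set N := G.neighborFinset x with hN
  have hxN : x ∉ N := by simp [hN]
  set t : ℝ := (2:ℝ) ^ (-((i:ℤ)+1)) with htdef
  set q : V → ℝ := fun v => (1 - pl) * γ v * t with hqdef
  set A : V → V → Finset (Act nA) := fun w v =>
    if v = x then {some (i, false)} else if v = w then {some (i, true)}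
    else if v ∈ N then Finset.univ \ {some (i, true)} else Finset.univ with hA
  -- characterization of the event
  have hchar : ∀ f : V → Act nA, receivesOn G f x i ↔ ∃ w ∈ N, ∀ v, f v ∈ A w v := by
    intro f
    constructor
    · rintro ⟨hl, hc⟩
      obtain ⟨w, hw⟩ := Finset.card_eq_one.mp hc
      have hwmem : w ∈ N.filter fun u => broadcasts f u i := by
        rw [hw]; exact Finset.mem_singleton_self w
      rw [Finset.mem_filter] at hwmem
      refine ⟨w, hwmem.1, fun v => ?_⟩
      by_cases hvx : v = x
      · subst hvx
        simpa [hA, listens] using hl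
      · by_cases hvw : v = w
        · subst hvw
          simpa [hA, hvx, broadcasts] using hwmem.2
        · by_cases hvN : v ∈ N
          · have hnot : v ∉ N.filter fun u => broadcasts f u i := by
              rw [hw]; simp [hvw]
            simp only [hA, hvx, hvw, hvN, if_false, if_true, if_neg, if_pos,
              Finset.mem_sdiff, Finset.mem_univ, Finset.mem_singleton, true_and]
            intro hfb
            exact hnot (Finset.mem_filter.mpr ⟨hvN, hfb⟩)
          · simp [hA, hvx, hvw, hvN]
    · rintro ⟨w, hwN, hf⟩
      have hwx : w ≠ x := fun h => hxN (h ▸ hwN)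
      have hfx : f x = some (i, false) := by simpa [hA] using hf x
      have hfw : f w = some (i, true) := by simpa [hA, hwx] using hf w
      refine ⟨hfx, ?_⟩
      have hfe : (N.filter fun u => broadcasts f u i) = {w} := by
        ext v
        simp only [Finset.mem_filter, Finset.mem_singleton]
        constructor
        · rintro ⟨hvN, hb⟩
          by_contra hvw
          have hvx : v ≠ x := fun h => hxN (h ▸ hvN)
          have h2 := hf v
          simp only [hA, hvx, hvw, hvN, if_neg, if_pos, if_false,
            Finset.mem_sdiff, Finset.mem_univ, Finset.mem_singleton, true_and] at h2
          exact h2 hb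
        · rintro rfl
          exact ⟨hwN, hfw⟩
      rw [hfe]
      exact Finset.card_singleton w
  -- disjointness
  have hdisj : ∀ (f : V → Act nA) w w', w ∈ N → w' ∈ N →
      (∀ v, f v ∈ A w v) → (∀ v, f v ∈ A w' v) → w = w' := by
    intro f w w' hw hw' h h'
    by_contra hne
    have hwx : w ≠ x := fun h0 => hxN (h0 ▸ hw)
    have h1 : f w = some (i, true) := by simpa [hA, hwx] using h w
    have h2 := h' w
    simp only [hA, hwx, hne, hw, if_neg, if_pos, if_false,
      Finset.mem_sdiff, Finset.mem_univ, Finset.mem_singleton, true_and] at h2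
    exact h2 h1
  -- per-vertex sums
  have hsum_univ : ∀ v : V, ∑ a ∈ (Finset.univ : Finset (Act nA)), actProb nA pl (γ v) a = 1 :=
    fun v => sum_actProb nA pl (γ v)
  have hsum_lis : ∀ v : V,
      ∑ a ∈ ({some (i, false)} : Finset (Act nA)), actProb nA pl (γ v) a = pl * γ v * t := by
    intro v; rw [Finset.sum_singleton]; rfl
  have hsum_bro : ∀ v : V,
      ∑ a ∈ ({some (i, true)} : Finset (Act nA)), actProb nA pl (γ v) a = (1 - pl) * γ v * t := by
    intro v; rw [Finset.sum_singleton]; rfl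
  have hsum_not : ∀ v : V,
      ∑ a ∈ (Finset.univ \ {some (i, true)} : Finset (Act nA)), actProb nA pl (γ v) a
        = 1 - (1 - pl) * γ v * t := by
    intro v
    rw [Finset.sum_sdiff_eq_sub (Finset.subset_univ _), hsum_univ, hsum_bro]
  -- product computation
  have hprod : ∀ w ∈ N, (∏ v, ∑ a ∈ A w v, actProb nA pl (γ v) a)
      = (pl * γ x * t) * (q w * ∏ v ∈ N.erase w, (1 - q v)) := by
    intro w hw
    have hwx : w ≠ x := fun h0 => hxN (h0 ▸ hw)
    have step1 : ∏ v ∈ insert x N, (∑ a ∈ A w v, actProb nA pl (γ v) a)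
        = ∏ v, (∑ a ∈ A w v, actProb nA pl (γ v) a) := by
      refine Finset.prod_subset (Finset.subset_univ _) (fun v _ hv => ?_)
      have hvx : v ≠ x := fun h0 => hv (by rw [h0]; exact Finset.mem_insert_self x N)
      have hvN : v ∉ N := fun h0 => hv (Finset.mem_insert_of_mem h0)
      have hvw : v ≠ w := fun h0 => hvN (h0 ▸ hw)
      simp only [hA, hvx, hvw, hvN, if_neg, if_false]
      exact hsum_univ v
    rw [← step1, Finset.prod_insert hxN]
    have hxval : ∑ a ∈ A w x, actProb nA pl (γ x) a = pl * γ x * t := by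
      simp only [hA, if_pos rfl]
      exact hsum_lis x
    rw [hxval]
    rw [← Finset.insert_erase hw, Finset.prod_insert (Finset.notMem_erase w N)]
    have hwval : ∑ a ∈ A w w, actProb nA pl (γ w) a = q w := by
      simp only [hA, hwx, if_neg, if_pos rfl, if_false]
      exact hsum_bro w
    rw [hwval]
    have herase : ∏ v ∈ N.erase w, (∑ a ∈ A w v, actProb nA pl (γ v) a)
        = ∏ v ∈ N.erase w, (1 - q v) := by
      refine Finset.prod_congr rfl fun v hv => ?_
      have hvw : v ≠ w := (Finset.mem_erase.mp hv).1
      have hvN : v ∈ N := (Finset.mem_erase.mp hv).2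
      have hvx : v ≠ x := fun h0 => hxN (h0 ▸ hvN)
      simp only [hA, hvx, hvw, hvN, if_neg, if_pos, if_false]
      exact hsum_not v
    rw [herase, Finset.erase_insert (Finset.notMem_erase w N)]
  -- main identity
  have hmain : roundPr nA pl γ (fun f => receivesOn G f x i)
      = (pl * γ x * t) * ∑ w ∈ N, q w * ∏ v ∈ N.erase w, (1 - q v) := by
    rw [roundPr_congr nA pl γ hchar, roundPr_exists nA pl γ N _ hdisj]
    rw [Finset.mul_sum]
    refine Finset.sum_congr rfl fun w hw => ?_
    rw [roundPr_cyl nA pl γ (A w)]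
    exact hprod w hw
  -- bounds
  have ht0 : (0:ℝ) < t := by positivity
  have ht12 : t ≤ 1/2 := by
    rw [htdef]
    calc (2:ℝ) ^ (-((i:ℤ)+1)) ≤ (2:ℝ) ^ (-1 : ℤ) := by
          apply zpow_le_zpow_right₀ (by norm_num)
          have : (0:ℤ) ≤ (i:ℤ) := Int.ofNat_nonneg _
          linarith
      _ = 1/2 := by norm_num
  have hq0 : ∀ v ∈ N, 0 ≤ q v := by
    intro v _
    have := (hγ v).1
    have h1 : (0:ℝ) ≤ 1 - pl := by linarith
    positivity
  have hq14 : ∀ v ∈ N, q v ≤ 1/4 := by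
    intro v _
    have h1 := (hγ v).1
    have h2 := (hγ v).2
    have h3 : (0:ℝ) ≤ 1 - pl := by linarith
    have h4 : 1 - pl ≤ 1 := by linarith
    calc (1 - pl) * γ v * t ≤ 1 * (1/2) * (1/2) := by
          apply mul_le_mul
          · apply mul_le_mul h4 h2 h1 (by norm_num)
          · exact ht12
          · exact ht0.le
          · norm_num
      _ = 1/4 := by norm_num
  set S := ∑ v ∈ N, q v with hSdef
  have hS0 : 0 ≤ S := Finset.sum_nonneg hq0
  have hB := B_le N q hq0 hq14
  have hL0 : 0 ≤ pl * γ x * t := by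
    have := (hγ x).1; positivity
  have hbound : roundPr nA pl γ (fun f => receivesOn G f x i)
      ≤ (pl * γ x * t) * ((4/3) * S * Real.exp (-S)) := by
    rw [hmain]
    exact mul_le_mul_of_nonneg_left hB hL0
  -- Gam decomposition
  have hGam : Gam G γ x = γ x + ∑ v ∈ N, γ v := by
    rw [Gam, Finset.sum_insert hxN]
  have hΓo0 : 0 ≤ ∑ v ∈ N, γ v := Finset.sum_nonneg fun v _ => (hγ v).1
  have hSeq : S = (1 - pl) * (∑ v ∈ N, γ v) * t := by
    rw [hSdef, hqdef]
    rw [← Finset.sum_mul, ← Finset.mul_sum]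
  have hE0 : (0:ℝ) ≤ Real.exp (-S) := (Real.exp_pos _).le
  have hplg0 : 0 ≤ pl * γ x := mul_nonneg hpl0.le (hγ x).1
  have hg2 := (hγ x).2
  have hg0 := (hγ x).1
  exact le_trans hbound (final_ineq pl (γ x) t S (Real.exp (-S)) (Gam G γ x)
    (∑ v ∈ N, γ v) hpl0 hpl hg0 hg2 ht0 ht12 hS0 hE0
    (S_exp_le_one hS0) (Ssq_exp_le_four hS0) hΓpos hGam hΓo0 hSeq)
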